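/- arXiv:1909.03896 — 3 statements merged into one kernel-verified Lean document; each statement's English description precedes it below -/
import Mathlib

section
/- Let (A_v)_{v ∈ V} be a finite family of arcs on the circle ℝ/ℤ and let G be its circular-arc intersection graph. Suppose G is triangle-free and W is a closed walk in G that is a cycle. Then the union of the arcs A_v over all vertices v visited by W equals the entire circle ℝ/ℤ. -/
/-- The intersection graph of a family of sets `A : V → Set X`: distinct indices
`u, v` are adjacent iff `A u ∩ A v ≠ ∅`. -/
def intersectionGraph {V X : Type*} (A : V → Set X) : SimpleGraph V where
  Adj u v := u ≠ v ∧ (A u ∩ A v).Nonempty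
  symm := by
    constructor
    rintro u v ⟨hne, x, hx1, hx2⟩
    exact ⟨hne.symm, x, hx2, hx1⟩
  loopless := by
    constructor
    rintro u ⟨hne, -⟩
    exact hne rfl

/-- The arc on the circle `ℝ/ℤ` obtained by projecting the closed real interval `[a, b]`. -/
def arc (a b : ℝ) : Set (AddCircle (1 : ℝ)) :=
  (fun x : ℝ => (x : AddCircle (1 : ℝ))) '' Set.Icc a b

lemma coe_int_addCircle (n : ℤ) : ((n : ℝ) : AddCircle (1:ℝ)) = 0 :=
  (AddCircle.coe_eq_zero_iff (1:ℝ)).mpr ⟨n, by simp⟩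

lemma coe_add_int (x : ℝ) (n : ℤ) : ((x + n : ℝ) : AddCircle (1:ℝ)) = x := by
  rw [AddCircle.coe_add, coe_int_addCircle, add_zero]

lemma addCircle_coe_inj {x y : ℝ} (h : (x : AddCircle (1:ℝ)) = y) (hd : |x - y| < 1) : x = y := by
  have h0 : ((x - y : ℝ) : AddCircle (1:ℝ)) = 0 := by
    rw [AddCircle.coe_sub, h, sub_self]
  obtain ⟨n, hn⟩ := (AddCircle.coe_eq_zero_iff (1:ℝ)).mp h0
  rw [zsmul_eq_mul, mul_one] at hn
  rw [← hn] at hd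
  have : |n| < 1 := by exact_mod_cast hd
  have : n = 0 := Int.abs_lt_one_iff.mp this
  have : x - y = 0 := by rw [← hn, this]; simp
  linarith

lemma arc_add_int (a b : ℝ) (n : ℤ) : arc (a + n) (b + n) = arc a b := by
  ext z
  constructor
  · rintro ⟨x, ⟨hx1, hx2⟩, rfl⟩
    refine ⟨x - n, ⟨by linarith, by linarith⟩, ?_⟩
    have := coe_add_int (x - n) n
    simpa using this
  · rintro ⟨x, ⟨hx1, hx2⟩, rfl⟩
    exact ⟨x + n, ⟨by linarith, by linarith⟩, coe_add_int x n⟩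

open SimpleGraph Walk in
lemma walk_first_edge {V : Type*} {G : SimpleGraph V} {v w : V} (p : G.Walk v w) (hp : ¬ p.Nil) :
    s(v, p.getVert 1) ∈ p.edges ∧ p.getVert 1 ∈ p.support := by
  cases p with
  | nil => simp at hp
  | cons h q =>
    rw [show (Walk.cons h q).getVert 1 = _ from Walk.snd_cons q h]
    simp [Walk.edges_cons, Walk.support_cons, q.start_mem_support]

open SimpleGraph Walk in
lemma cycle_two_neighbors' {V : Type*} {G : SimpleGraph V} {m : V} (c : G.Walk m m)
    (hc : c.IsCycle) :
    ∃ u w, u ≠ w ∧ G.Adj m u ∧ G.Adj m w ∧ u ∈ c.support ∧ w ∈ c.support := by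
  cases c with
  | nil => exact absurd rfl hc.ne_nil
  | @cons _ u _ h' p =>
    rw [Walk.cons_isCycle_iff] at hc
    have hnp : ¬ p.reverse.Nil := Walk.not_nil_of_ne h'.ne
    obtain ⟨hedge, hsup⟩ := walk_first_edge p.reverse hnp
    refine ⟨u, p.reverse.getVert 1, ?_, h', p.reverse.adj_snd hnp, ?_, ?_⟩
    · intro he
      apply hc.2
      rw [← he, Walk.edges_reverse, List.mem_reverse] at hedge
      exact hedge
    · simp [Walk.support_cons, p.start_mem_support]
    · rw [Walk.support_reverse, List.mem_reverse] at hsup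
      simp [Walk.support_cons, hsup]

open SimpleGraph Walk in
lemma cycle_two_neighbors {V : Type*} [DecidableEq V] {G : SimpleGraph V} {x : V}
    {W : G.Walk x x} (hW : W.IsCycle) {m : V} (hm : m ∈ W.support) :
    ∃ u w, u ≠ w ∧ G.Adj m u ∧ G.Adj m w ∧ u ∈ W.support ∧ w ∈ W.support := by
  obtain ⟨u, w, h1, h2, h3, h4, h5⟩ := cycle_two_neighbors' (W.rotate m hm) (hW.rotate hm)
  have hsub : ∀ v, v ∈ (W.rotate m hm).support → v ∈ W.support := by
    intro v hv
    rw [Walk.support_eq_cons] at hv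
    rcases List.mem_cons.mp hv with rfl | hv
    · exact hm
    · exact List.mem_of_mem_tail ((Walk.support_rotate W m hm).mem_iff.mp hv)
  exact ⟨u, w, h1, h2, h3, hsub u h4, hsub w h5⟩

theorem stmt5 {V : Type*} [Fintype V] (a b : V → ℝ) (hab : ∀ v, a v ≤ b v)
    (htf : (intersectionGraph fun v => arc (a v) (b v)).CliqueFree 3)
    (x : V) (W : (intersectionGraph fun v => arc (a v) (b v)).Walk x x)
    (hW : W.IsCycle) :
    ⋃ v ∈ W.support, arc (a v) (b v) = Set.univ := by
  classical
  apply Set.eq_univ_of_forall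
  intro p
  induction p using QuotientAddGroup.induction_on with
  | H p₀ => ?_
  by_contra hp
  have hmem : ∀ v ∈ W.support, (p₀ : AddCircle (1:ℝ)) ∉ arc (a v) (b v) := by
    intro v hv hcon
    exact hp (Set.mem_biUnion hv hcon)
  set a' : V → ℝ := fun v => a v - ⌊a v - p₀⌋ with ha'def
  set b' : V → ℝ := fun v => b v - ⌊a v - p₀⌋ with hb'def
  have harc : ∀ v, arc (a' v) (b' v) = arc (a v) (b v) := by
    intro v
    have h := arc_add_int (a v) (b v) (-⌊a v - p₀⌋)
    rw [← h]
    congr 1 <;> · simp only [ha'def, hb'def]; push_cast; ring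
  have hIcc : ∀ v ∈ W.support, Set.Icc (a' v) (b' v) ⊆ Set.Ioo p₀ (p₀ + 1) := by
    intro v hv
    have hfl := Int.floor_le (a v - p₀)
    have hfl2 := Int.lt_floor_add_one (a v - p₀)
    have h1 : p₀ ≤ a' v := by simp only [ha'def]; linarith
    have h2 : a' v ≠ p₀ := by
      intro h
      apply hmem v hv
      rw [← harc v]
      refine ⟨a' v, ⟨le_refl _, ?_⟩, by rw [h]⟩
      have := hab v
      simp only [ha'def, hb'def]
      linarith
    have h3 : a' v < p₀ + 1 := by simp only [ha'def]; linarith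
    have h4 : b' v < p₀ + 1 := by
      by_contra hcon
      push_neg at hcon
      apply hmem v hv
      rw [← harc v]
      refine ⟨p₀ + 1, ⟨le_of_lt h3, hcon⟩, ?_⟩
      have := coe_add_int p₀ 1
      simpa using this
    intro t ht
    exact ⟨lt_of_lt_of_le (lt_of_le_of_ne h1 (Ne.symm h2)) ht.1,
      lt_of_le_of_lt ht.2 h4⟩
  have hneF : W.support.toFinset.Nonempty := ⟨x, by simp [SimpleGraph.Walk.start_mem_support]⟩
  obtain ⟨m, hmF, hmin⟩ := W.support.toFinset.exists_min_image b' hneF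
  have hm : m ∈ W.support := List.mem_toFinset.mp hmF
  obtain ⟨u, w, huw, hadjmu, hadjmw, hu, hw⟩ := cycle_two_neighbors hW hm
  have key : ∀ v, v ∈ W.support →
      (intersectionGraph fun v => arc (a v) (b v)).Adj m v →
      b' m ∈ Set.Icc (a' v) (b' v) := by
    intro v hv hadj
    obtain ⟨hne2, z, hz1, hz2⟩ := hadj
    have hz1' : z ∈ arc (a' m) (b' m) := by rw [harc m]; exact hz1
    have hz2' : z ∈ arc (a' v) (b' v) := by rw [harc v]; exact hz2
    obtain ⟨s, hs, rfl⟩ := hz1'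
    obtain ⟨t, ht, hco⟩ := hz2'
    have hsI := hIcc m hm hs
    have htI := hIcc v hv ht
    have hst : t = s := by
      apply addCircle_coe_inj hco
      rw [abs_lt]
      constructor <;> [nlinarith [hsI.1, hsI.2, htI.1, htI.2];
        nlinarith [hsI.1, hsI.2, htI.1, htI.2]]
    have h1 : a' v ≤ b' m := le_trans ht.1 (hst ▸ hs.2)
    have h2 : b' m ≤ b' v := hmin v (List.mem_toFinset.mpr hv)
    exact ⟨h1, h2⟩
  have hbmu : b' m ∈ Set.Icc (a' u) (b' u) := key u hu hadjmu
  have hbmw : b' m ∈ Set.Icc (a' w) (b' w) := key w hw hadjmw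
  have hadjuw : (intersectionGraph fun v => arc (a v) (b v)).Adj u w := by
    refine ⟨huw, ⟨(b' m : AddCircle (1:ℝ)), ?_, ?_⟩⟩
    · show (↑(b' m) : AddCircle (1:ℝ)) ∈ arc (a u) (b u)
      rw [← harc u]; exact ⟨b' m, hbmu, rfl⟩
    · show (↑(b' m) : AddCircle (1:ℝ)) ∈ arc (a w) (b w)
      rw [← harc w]; exact ⟨b' m, hbmw, rfl⟩
  exact htf {m, u, w} (SimpleGraph.is3Clique_triple_iff.mpr ⟨hadjmu, hadjmw, hadjuw⟩)
end

section
/- Let (A_v)_{v ∈ V} be a finite family of arcs on the circle ℝ/ℤ and let G be its circular-arc intersection graph. Let t be the maximum cardinality of a subset of V inducing a triangle-free subgraph of G, and let b be the maximum cardinality of a subset of V inducing a bipartite (2-colorable) subgraph of G. Then t − 1 ≤ b ≤ t. -/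
private lemma coe_eq_coe_iff {x y : ℝ} :
    ((x : ℝ) : AddCircle (1 : ℝ)) = ((y : ℝ) : AddCircle (1 : ℝ)) ↔ ∃ k : ℤ, x = y + k := by
  rw [show ((x : ℝ) : AddCircle (1 : ℝ)) = QuotientAddGroup.mk x from rfl,
    show ((y : ℝ) : AddCircle (1 : ℝ)) = QuotientAddGroup.mk y from rfl,
    QuotientAddGroup.eq_iff_sub_mem, AddSubgroup.mem_zmultiples_iff]
  constructor
  · rintro ⟨k, hk⟩
    refine ⟨k, ?_⟩
    have : (k : ℝ) * 1 = x - y := by rw [← zsmul_eq_mul]; exact hk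
    linarith [this]
  · rintro ⟨k, hk⟩
    exact ⟨k, by rw [zsmul_eq_mul]; linarith⟩

/-- If one arc is long (length ≥ 1), it meets every other arc. -/
private lemma arc_inter_of_long {av bv au bu : ℝ} (h1 : 1 ≤ bv - av) (h2 : au ≤ bu) :
    (arc av bv ∩ arc au bu).Nonempty := by
  refine ⟨((au : ℝ) : AddCircle (1 : ℝ)), ⟨au + (⌈av - au⌉ : ℤ), ⟨?_, ?_⟩, ?_⟩,
    ⟨au, ⟨le_refl _, h2⟩, rfl⟩⟩
  · have := Int.le_ceil (av - au); linarith
  · have := Int.ceil_lt_add_one (av - au); linarith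
  · exact coe_eq_coe_iff.mpr ⟨⌈av - au⌉, rfl⟩

open Classical in
private noncomputable def colFix {W : Type*} (rel : W → W → Prop) (Adj : W → W → Prop)
    (m : W → ℕ) (wf : WellFounded (fun u v : W => m u < m v))
    (hm : ∀ u v, rel u v → m u < m v) : W → Bool :=
  wf.fix (fun v ih =>
    if h : ∃ u, rel u v ∧ Adj u v then !(ih h.choose (hm _ _ h.choose_spec.1)) else false)

open Classical in
private lemma colFix_eq {W : Type*} (rel : W → W → Prop) (Adj : W → W → Prop)
    (m : W → ℕ) (wf : WellFounded (fun u v : W => m u < m v))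
    (hm : ∀ u v, rel u v → m u < m v) (v : W) :
    colFix rel Adj m wf hm v =
      if h : ∃ u, rel u v ∧ Adj u v then !(colFix rel Adj m wf hm h.choose) else false :=
  WellFounded.fix_eq wf _ v

/-- A triangle-free "interval graph" is 2-colorable. -/
private lemma interval_colorable {W : Type*} [Fintype W] (G : SimpleGraph W)
    (L R : W → ℝ) (hLR : ∀ v, L v ≤ R v)
    (hadj : ∀ u v, G.Adj u v ↔ u ≠ v ∧ (L u ≤ R v ∧ L v ≤ R u))
    (htri : ∀ u v w, G.Adj u v → G.Adj u w → G.Adj v w → False) :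
    G.Colorable 2 := by
  classical
  set f : W → ℕ := fun w => (Fintype.equivFin W w : ℕ) with hfdef
  have hf : Function.Injective f := fun x y h =>
    (Fintype.equivFin W).injective (Fin.val_injective h)
  set rel : W → W → Prop := fun u v => L u < L v ∨ (L u = L v ∧ f u < f v) with hrel
  have rel_irrefl : ∀ v, ¬ rel v v := by
    intro v h
    rcases h with h | ⟨_, h⟩ <;> exact lt_irrefl _ h
  have rel_le : ∀ u v, rel u v → L u ≤ L v := by
    intro u v h
    rcases h with h | ⟨h, _⟩
    · exact le_of_lt h
    · exact le_of_eq h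
  have rel_trans : ∀ u v w, rel u v → rel v w → rel u w := by
    intro u v w h1 h2
    rcases h1 with h1 | ⟨e1, h1⟩ <;> rcases h2 with h2 | ⟨e2, h2⟩
    · exact Or.inl (h1.trans h2)
    · exact Or.inl (e2 ▸ h1)
    · exact Or.inl (e1 ▸ h2)
    · exact Or.inr ⟨e1.trans e2, h1.trans h2⟩
  have rel_total : ∀ u v, u ≠ v → rel u v ∨ rel v u := by
    intro u v hne
    rcases lt_trichotomy (L u) (L v) with h | h | h
    · exact Or.inl (Or.inl h)
    · rcases lt_trichotomy (f u) (f v) with h' | h' | h'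
      · exact Or.inl (Or.inr ⟨h, h'⟩)
      · exact absurd (hf h') hne
      · exact Or.inr (Or.inr ⟨h.symm, h'⟩)
    · exact Or.inr (Or.inl h)
  set m : W → ℕ := fun v => (Finset.univ.filter (fun u => rel u v)).card with hm_def
  have hm : ∀ u v, rel u v → m u < m v := by
    intro u v h
    apply Finset.card_lt_card
    rw [Finset.ssubset_iff_of_subset]
    · exact ⟨u, by simp [h], by simp [rel_irrefl u]⟩
    · intro w hw
      simp only [Finset.mem_filter, Finset.mem_univ, true_and] at hw ⊢
      exact rel_trans w u v hw h
  have wf : WellFounded (fun u v : W => m u < m v) := InvImage.wf m Nat.lt_wfRel.wf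
  set c : W → Bool := colFix rel G.Adj m wf hm with hcdef
  have hc : ∀ v, c v = @dite Bool (∃ u, rel u v ∧ G.Adj u v) (Classical.propDecidable _)
      (fun h => !(c h.choose)) (fun _ => false) :=
    fun v => colFix_eq rel G.Adj m wf hm v
  have uniq : ∀ v u u', rel u v → G.Adj u v → rel u' v → G.Adj u' v → u = u' := by
    intro v u u' h1 a1 h2 a2
    by_contra hne
    have hLu : L u ≤ L v := rel_le _ _ h1
    have hLu' : L u' ≤ L v := rel_le _ _ h2
    have b1 := (hadj u v).mp a1
    have b2 := (hadj u' v).mp a2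
    have a3 : G.Adj u u' := (hadj u u').mpr ⟨hne, le_trans hLu b2.2.2, le_trans hLu' b1.2.2⟩
    exact htri u u' v a3 a1 a2
  have step : ∀ u v, rel u v → G.Adj u v → c v = !(c u) := by
    intro u v hr ha
    have hex : ∃ u, rel u v ∧ G.Adj u v := ⟨u, hr, ha⟩
    rw [hc v, dif_pos hex]
    have : hex.choose = u := uniq v hex.choose u hex.choose_spec.1 hex.choose_spec.2 hr ha
    rw [this]
  have tot : ∀ u v, G.Adj u v → c u ≠ c v := by
    intro u v ha
    have hne := ((hadj u v).mp ha).1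
    rcases rel_total u v hne with h | h
    · rw [step u v h ha]
      cases c u <;> simp
    · rw [step v u h ha.symm]
      cases c v <;> simp
  refine ⟨SimpleGraph.Coloring.mk (fun v => if c v then (1 : Fin 2) else 0) ?_⟩
  intro u v ha
  have hne := tot u v ha
  cases hu : c u <;> cases hv : c v
  · exact absurd (hu.trans hv.symm) hne
  · simp only [hu, hv]; decide
  · simp only [hu, hv]; decide
  · exact absurd (hu.trans hv.symm) hne

theorem stmt6 {V : Type*} [Fintype V] (a b : V → ℝ) (hab : ∀ v, a v ≤ b v)
    (t bp : ℕ)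
    (ht : IsGreatest {n : ℕ | ∃ S : Finset V, S.card = n ∧
      ((intersectionGraph fun v => arc (a v) (b v)).induce (↑S : Set V)).CliqueFree 3} t)
    (hb : IsGreatest {n : ℕ | ∃ S : Finset V, S.card = n ∧
      ((intersectionGraph fun v => arc (a v) (b v)).induce (↑S : Set V)).Colorable 2} bp) :
    t ≤ bp + 1 ∧ bp ≤ t := by
  classical
  set G0 : SimpleGraph V := intersectionGraph fun v => arc (a v) (b v) with hG0
  constructor
  · -- t ≤ bp + 1
    obtain ⟨S, hScard, hSfree⟩ := ht.1
    suffices h : ∃ S' : Finset V, t - 1 ≤ S'.card ∧ (G0.induce (↑S' : Set V)).Colorable 2 by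
      obtain ⟨S', h1, h2⟩ := h
      have h3 : S'.card ≤ bp := hb.2 ⟨S', rfl, h2⟩
      omega
    have htri0 : ∀ u v w : V, u ∈ S → v ∈ S → w ∈ S →
        G0.Adj u v → G0.Adj u w → G0.Adj v w → False := by
      intro u v w hu hv hw h1 h2 h3
      refine hSfree {⟨u, hu⟩, ⟨v, hv⟩, ⟨w, hw⟩} ?_
      rw [SimpleGraph.is3Clique_triple_iff]
      exact ⟨h1, h2, h3⟩
    rcases Nat.eq_zero_or_pos t with h0 | hpos
    · refine ⟨∅, by omega, ?_⟩
      refine ⟨SimpleGraph.Coloring.mk (fun v => 0) ?_⟩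
      intro u v h
      exact absurd u.2 (by simp)
    have hSne : S.Nonempty := by
      rw [← Finset.card_pos, hScard]; exact hpos
    by_cases hA : ∃ v ∈ S, 1 ≤ b v - a v
    · obtain ⟨v1, hv1S, hv1⟩ := hA
      refine ⟨S.erase v1, ?_, ?_⟩
      · rw [Finset.card_erase_of_mem hv1S, hScard]
      · have hnoadj : ∀ u v : ↥((↑(S.erase v1) : Set V)), ¬ (G0.induce _).Adj u v := by
          intro u v h
          have hu : (u : V) ∈ S.erase v1 := by exact_mod_cast u.2
          have hv : (v : V) ∈ S.erase v1 := by exact_mod_cast v.2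
          have h' : G0.Adj ↑u ↑v := h
          have hadj1 : G0.Adj v1 ↑u :=
            ⟨(Finset.ne_of_mem_erase hu).symm, arc_inter_of_long hv1 (hab ↑u)⟩
          have hadj2 : G0.Adj v1 ↑v :=
            ⟨(Finset.ne_of_mem_erase hv).symm, arc_inter_of_long hv1 (hab ↑v)⟩
          exact htri0 v1 ↑u ↑v hv1S (Finset.mem_of_mem_erase hu) (Finset.mem_of_mem_erase hv)
            hadj1 hadj2 h'
        refine ⟨SimpleGraph.Coloring.mk (fun v => 0) ?_⟩
        intro u v h
        exact absurd h (hnoadj u v)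
    · push_neg at hA
      obtain ⟨v0, hv0S⟩ := hSne
      set p : AddCircle (1 : ℝ) := ((a v0 : ℝ) : AddCircle (1 : ℝ)) with hp_def
      have hpv0 : p ∈ arc (a v0) (b v0) := ⟨a v0, ⟨le_refl _, hab v0⟩, rfl⟩
      set P : V → Prop := fun v => v = v0 ∨ p ∉ arc (a v) (b v) with hP
      set S' : Finset V := S.filter P with hS'
      have hsub : S' ⊆ S := Finset.filter_subset _ _
      have hcard1 : (S.filter (fun v => ¬ P v)).card ≤ 1 := by
        rw [Finset.card_le_one]
        intro x hx y hy
        simp only [hP, Finset.mem_filter, not_or, not_not] at hx hy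
        by_contra hxy
        exact htri0 v0 x y hv0S hx.1 hy.1
          ⟨Ne.symm hx.2.1, p, hpv0, hx.2.2⟩
          ⟨Ne.symm hy.2.1, p, hpv0, hy.2.2⟩
          ⟨hxy, p, hx.2.2, hy.2.2⟩
      have hcard2 : t - 1 ≤ S'.card := by
        have h5 := Finset.card_filter_add_card_filter_not (s := S) (p := P)
        have h4 : S'.card = (S.filter P).card := rfl
        omega
      set L : V → ℝ := fun v => if v = v0 then 0 else Int.fract (a v - a v0) with hL
      set R : V → ℝ := fun v => L v + (b v - a v) with hR
      have hLR : ∀ v, L v ≤ R v := fun v =>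
        le_add_of_nonneg_right (sub_nonneg.mpr (hab v))
      have hrep : ∀ v ∈ S', ∃ m : ℤ, a v = a v0 + L v + m ∧ 0 ≤ L v ∧ R v < 1 := by
        intro v hv
        rcases eq_or_ne v v0 with rfl | hne
        · refine ⟨0, by simp [hL], by simp [hL], ?_⟩
          simp only [hR, hL, if_pos rfl]
          have := hA v hv0S
          push_cast
          linarith
        · have hpv : p ∉ arc (a v) (b v) := by
            have := (Finset.mem_filter.mp hv).2
            rcases this with h | h
            · exact absurd h hne
            · exact h
          have hfr := Int.floor_add_fract (a v - a v0)
          refine ⟨⌊a v - a v0⌋, ?_, ?_, ?_⟩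
          · simp only [hL, if_neg hne]
            linarith
          · simp only [hL, if_neg hne]
            exact Int.fract_nonneg _
          · by_contra hge
            push_neg at hge
            simp only [hR, hL, if_neg hne] at hge
            apply hpv
            refine ⟨a v0 + (1 + (⌊a v - a v0⌋ : ℝ)), ⟨?_, ?_⟩, ?_⟩
            · have := Int.fract_lt_one (a v - a v0)
              linarith
            · linarith
            · exact coe_eq_coe_iff.mpr ⟨1 + ⌊a v - a v0⌋, by push_cast; ring⟩
      have hint : ∀ u ∈ S', ∀ v ∈ S',
          ((arc (a u) (b u)) ∩ (arc (a v) (b v))).Nonempty ↔ (L u ≤ R v ∧ L v ≤ R u) := by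
        intro u hu v hv
        obtain ⟨mu, hmu, hLu, hRu⟩ := hrep u hu
        obtain ⟨mv, hmv, hLv, hRv⟩ := hrep v hv
        have hbu : b u = a v0 + R u + mu := by
          simp only [hR] at *; linarith
        have hbv : b v = a v0 + R v + mv := by
          simp only [hR] at *; linarith
        constructor
        · rintro ⟨x, ⟨r, ⟨hr1, hr2⟩, hrx⟩, ⟨r', ⟨hr1', hr2'⟩, hrx'⟩⟩
          have heq : ((r : ℝ) : AddCircle (1 : ℝ)) = ((r' : ℝ) : AddCircle (1 : ℝ)) :=
            hrx.trans hrx'.symm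
          obtain ⟨k, hk⟩ := coe_eq_coe_iff.mp heq
          set s : ℝ := r - a v0 - mu with hs_def
          set s' : ℝ := r' - a v0 - mv with hs'_def
          have hs1 : L u ≤ s := by rw [hmu] at hr1; simp only [hs_def]; linarith
          have hs2 : s ≤ R u := by rw [hbu] at hr2; simp only [hs_def]; linarith
          have hs1' : L v ≤ s' := by rw [hmv] at hr1'; simp only [hs'_def]; linarith
          have hs2' : s' ≤ R v := by rw [hbv] at hr2'; simp only [hs'_def]; linarith
          have hkz : k - mu + mv = 0 := by
            have e1 : (-1 : ℝ) < (k - mu + mv : ℤ) := by push_cast; linarith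
            have e2 : ((k - mu + mv : ℤ) : ℝ) < 1 := by push_cast; linarith
            have e1' : (-1 : ℤ) < k - mu + mv := by exact_mod_cast e1
            have e2' : k - mu + mv < 1 := by exact_mod_cast e2
            omega
          have hss' : s = s' := by
            have : ((k - mu + mv : ℤ) : ℝ) = 0 := by rw [hkz]; norm_num
            push_cast at this
            simp only [hs_def, hs'_def]
            linarith
          exact ⟨by linarith, by linarith⟩
        · rintro ⟨h1, h2⟩
          set s : ℝ := max (L u) (L v) with hs_def
          have hsu : s ≤ R u := max_le (hLR u) h2
          have hsv : s ≤ R v := max_le h1 (hLR v)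
          refine ⟨((a v0 + s : ℝ) : AddCircle (1 : ℝ)),
            ⟨a v0 + s + mu, ⟨?_, ?_⟩, ?_⟩, ⟨a v0 + s + mv, ⟨?_, ?_⟩, ?_⟩⟩
          · rw [hmu]; have := le_max_left (L u) (L v); linarith
          · rw [hbu]; linarith
          · exact coe_eq_coe_iff.mpr ⟨mu, rfl⟩
          · rw [hmv]; have := le_max_right (L u) (L v); linarith
          · rw [hbv]; linarith
          · exact coe_eq_coe_iff.mpr ⟨mv, rfl⟩
      refine ⟨S', hcard2, ?_⟩
      refine interval_colorable _ (fun v : ↥((↑S' : Set V)) => L ↑v)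
        (fun v : ↥((↑S' : Set V)) => R ↑v) (fun v => hLR ↑v) ?_ ?_
      · intro u v
        have hu : (u : V) ∈ S' := by exact_mod_cast u.2
        have hv : (v : V) ∈ S' := by exact_mod_cast v.2
        have : (G0.induce (↑S' : Set V)).Adj u v ↔
            ((u : V) ≠ (v : V) ∧ ((arc (a ↑u) (b ↑u)) ∩ (arc (a ↑v) (b ↑v))).Nonempty) :=
          Iff.rfl
        rw [this, hint ↑u hu ↑v hv]
        constructor
        · rintro ⟨h1, h2⟩
          exact ⟨fun h => h1 (congrArg _ h), h2⟩
        · rintro ⟨h1, h2⟩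
          exact ⟨fun h => h1 (Subtype.ext h), h2⟩
      · intro u v w h1 h2 h3
        have hu : (u : V) ∈ S' := by exact_mod_cast u.2
        have hv : (v : V) ∈ S' := by exact_mod_cast v.2
        have hw : (w : V) ∈ S' := by exact_mod_cast w.2
        exact htri0 ↑u ↑v ↑w (hsub hu) (hsub hv) (hsub hw) h1 h2 h3
  · -- bp ≤ t
    obtain ⟨T, hTcard, hTcol⟩ := hb.1
    exact ht.2 ⟨T, hTcard, hTcol.cliqueFree (by norm_num)⟩
end

section
/- Let (A_v)_{v ∈ V} be a finite family of arcs on the circle ℝ/ℤ and let G be its circular-arc intersection graph. Let t be the maximum cardinality of a subset of V inducing a triangle-free subgraph of G. Then there exists a subset S ⊆ V with |S| ≥ t − 1 such that the subgraph of G induced by S is acyclic (a forest). -/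
/- ### Auxiliary lemmas -/

lemma aux_coe_eq_coe (x y : ℝ) :
    ((x : AddCircle (1:ℝ)) = (y : AddCircle (1:ℝ))) ↔ ∃ n : ℤ, x = y + n := by
  rw [← sub_eq_zero, ← AddCircle.coe_sub, AddCircle.coe_eq_zero_iff]
  constructor
  · rintro ⟨n, hn⟩
    rw [zsmul_eq_mul, mul_one] at hn
    exact ⟨n, by linarith⟩
  · rintro ⟨n, hn⟩
    exact ⟨n, by rw [zsmul_eq_mul, mul_one, hn]; ring⟩

lemma aux_arc_shift (a b : ℝ) (n : ℤ) : arc (a - n) (b - n) = arc a b := by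
  ext p
  constructor
  · rintro ⟨y, hy, rfl⟩
    exact ⟨y + n, ⟨by linarith [hy.1], by linarith [hy.2]⟩,
      ((aux_coe_eq_coe (y + n) y).mpr ⟨n, rfl⟩)⟩
  · rintro ⟨y, hy, rfl⟩
    refine ⟨y - n, ⟨by linarith [hy.1], by linarith [hy.2]⟩, ?_⟩
    exact (aux_coe_eq_coe (y - n) y).mpr ⟨-n, by push_cast; ring⟩

lemma aux_arc_univ {a b : ℝ} (h : 1 ≤ b - a) : arc a b = Set.univ := by
  haveI : Fact ((0:ℝ) < 1) := ⟨one_pos⟩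
  apply Set.eq_univ_of_univ_subset
  rw [← AddCircle.coe_image_Icc_eq (1:ℝ) a]
  exact Set.image_mono (Set.Icc_subset_Icc le_rfl (by linarith))

lemma aux_arc_inter_iff {m a b c d : ℝ} (h1 : Set.Icc a b ⊆ Set.Ico m (m+1))
    (h2 : Set.Icc c d ⊆ Set.Ico m (m+1)) :
    (arc a b ∩ arc c d).Nonempty ↔ (Set.Icc a b ∩ Set.Icc c d).Nonempty := by
  constructor
  · rintro ⟨p, ⟨x, hx, rfl⟩, ⟨y, hy, hyx⟩⟩
    obtain ⟨n, hn⟩ := (aux_coe_eq_coe y x).mp hyx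
    have hx' := h1 hx
    have hy' := h2 hy
    have h3 : (n:ℝ) < 1 := by
      have := hx'.1; have := hy'.2
      simp only [Set.mem_Ico] at hx' hy'
      linarith [hx'.1, hy'.2]
    have h4 : (-1:ℝ) < (n:ℝ) := by
      simp only [Set.mem_Ico] at hx' hy'
      linarith [hx'.2, hy'.1]
    have hn0 : n = 0 := by
      have h3' : n < 1 := by exact_mod_cast h3
      have h4' : -1 < n := by exact_mod_cast h4
      omega
    have hxy2 : y = x := by rw [hn0] at hn; simpa using hn
    exact ⟨x, hx, hxy2 ▸ hy⟩
  · rintro ⟨x, hx1, hx2⟩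
    exact ⟨_, Set.mem_image_of_mem _ hx1, Set.mem_image_of_mem _ hx2⟩

lemma aux_getVert_mem_support {W : Type*} {G : SimpleGraph W} {u v : W}
    (p : G.Walk u v) (i : ℕ) : p.getVert i ∈ p.support := by
  induction p generalizing i with
  | nil => cases i <;> simp [SimpleGraph.Walk.getVert]
  | cons h q ih =>
    cases i with
    | zero => simp [SimpleGraph.Walk.getVert]
    | succ n =>
      rw [SimpleGraph.Walk.support_cons]
      exact List.mem_cons_of_mem _ (ih n)

lemma aux_first_edge_mem {W : Type*} {G : SimpleGraph W} {u v : W}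
    (p : G.Walk u v) (hp : ¬ p.Nil) : s(u, p.getVert 1) ∈ p.edges := by
  cases p with
  | nil => exact absurd SimpleGraph.Walk.Nil.nil hp
  | cons h q =>
    rw [SimpleGraph.Walk.edges_cons]
    have h1 : (SimpleGraph.Walk.cons h q).getVert 1 = q.getVert 0 := rfl
    rw [h1, SimpleGraph.Walk.getVert_zero]
    exact List.mem_cons_self

lemma aux_acyclic_of_no_edges {W : Type*} {G : SimpleGraph W}
    (h : ∀ u v, ¬ G.Adj u v) : G.IsAcyclic := by
  intro v c hc
  cases c with
  | nil => exact hc.ne_nil rfl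
  | cons h' p => exact h _ _ h'

lemma aux_no_triangle {V : Type*} {A : V → Set (AddCircle (1:ℝ))} {S : Finset V}
    (hcf : ((intersectionGraph A).induce (↑S : Set V)).CliqueFree 3)
    {x y z : V} (hx : x ∈ S) (hy : y ∈ S) (hz : z ∈ S)
    (hxy : x ≠ y) (hxz : x ≠ z) (hyz : y ≠ z)
    (ixy : (A x ∩ A y).Nonempty) (ixz : (A x ∩ A z).Nonempty)
    (iyz : (A y ∩ A z).Nonempty) : False := by
  classical
  have h1 : ((intersectionGraph A).induce (↑S : Set V)).Adj
      ⟨x, hx⟩ ⟨y, hy⟩ := ⟨hxy, ixy⟩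
  have h2 : ((intersectionGraph A).induce (↑S : Set V)).Adj
      ⟨x, hx⟩ ⟨z, hz⟩ := ⟨hxz, ixz⟩
  have h3 : ((intersectionGraph A).induce (↑S : Set V)).Adj
      ⟨y, hy⟩ ⟨z, hz⟩ := ⟨hyz, iyz⟩
  exact hcf _ (SimpleGraph.is3Clique_triple_iff.mpr ⟨h1, h2, h3⟩)

lemma aux_interval_acyclic {W : Type*} (G : SimpleGraph W) (α β : W → ℝ)
    (hab : ∀ v, α v ≤ β v)
    (hiff : ∀ u v, G.Adj u v ↔ u ≠ v ∧
      (Set.Icc (α u) (β u) ∩ Set.Icc (α v) (β v)).Nonempty)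
    (hcf : ∀ x y z : W, G.Adj x y → G.Adj x z → G.Adj y z → False) :
    G.IsAcyclic := by
  classical
  intro v c hc
  obtain ⟨j, hjmem, hjmax⟩ : ∃ j ∈ c.support, ∀ x ∈ c.support, α x ≤ α j := by
    obtain ⟨j, hj1, hj2⟩ := c.support.toFinset.exists_max_image α
      ⟨v, List.mem_toFinset.mpr c.start_mem_support⟩
    exact ⟨j, List.mem_toFinset.mp hj1, fun x hx => hj2 x (List.mem_toFinset.mpr hx)⟩
  have hd : (c.rotate j hjmem).IsCycle := hc.rotate hjmem
  have hdsup : ∀ x ∈ (c.rotate j hjmem).support, α x ≤ α j := by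
    intro x hx
    rw [SimpleGraph.Walk.support_eq_cons] at hx
    rcases List.mem_cons.mp hx with rfl | hx'
    · exact le_refl _
    · exact hjmax x (List.mem_of_mem_tail
        (((SimpleGraph.Walk.support_rotate c j hjmem).mem_iff).mp hx'))
  revert hd hdsup
  generalize c.rotate j hjmem = d
  intro hd hdsup
  cases d with
  | nil => exact hd.ne_nil rfl
  | @cons _ u _ h q =>
    have hlen : 2 ≤ q.length := by
      have := hd.three_le_length
      rw [SimpleGraph.Walk.length_cons] at this
      omega
    have hqrnil : ¬ q.reverse.Nil := by
      rw [SimpleGraph.Walk.not_nil_iff_lt_length, SimpleGraph.Walk.length_reverse]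
      omega
    set w := q.reverse.getVert 1 with hw
    have hjw : G.Adj j w := SimpleGraph.Walk.adj_snd hqrnil
    have hwsup : w ∈ q.support := by
      have h2 : w ∈ q.reverse.support := aux_getVert_mem_support q.reverse 1
      rwa [SimpleGraph.Walk.support_reverse, List.mem_reverse] at h2
    have hαu : α u ≤ α j := hdsup u (by
      rw [SimpleGraph.Walk.support_cons]
      exact List.mem_cons_of_mem _ q.start_mem_support)
    have hαw : α w ≤ α j := hdsup w (by
      rw [SimpleGraph.Walk.support_cons]
      exact List.mem_cons_of_mem _ hwsup)
    have huw : u ≠ w := by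
      intro huw_eq
      have hmem : s(j, w) ∈ q.reverse.edges := by
        rw [hw]
        exact aux_first_edge_mem q.reverse hqrnil
      have hmem' : s(j, w) ∈ q.edges := by
        rwa [SimpleGraph.Walk.edges_reverse, List.mem_reverse] at hmem
      have hnodup := hd.edges_nodup
      rw [SimpleGraph.Walk.edges_cons, List.nodup_cons] at hnodup
      rw [← huw_eq] at hmem'
      exact hnodup.1 hmem'
    obtain ⟨x, hx⟩ := ((hiff j u).mp h).2
    obtain ⟨y, hy⟩ := ((hiff j w).mp hjw).2
    have hadj_uw : G.Adj u w := by
      refine (hiff u w).mpr ⟨huw, ⟨max (α u) (α w), ?_, ?_⟩⟩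
      · exact ⟨le_max_left _ _, max_le (hab u) (hαw.trans (hx.1.1.trans hx.2.2))⟩
      · exact ⟨le_max_right _ _, max_le (hαu.trans (hy.1.1.trans hy.2.2)) (hab w)⟩
    exact hcf j u w h hjw hadj_uw

lemma aux_boxed_acyclic {V : Type*} (a b : V → ℝ) (hab : ∀ v, a v ≤ b v)
    (S T : Finset V) (hTS : T ⊆ S) (m : ℝ)
    (hcf : ((intersectionGraph fun v => arc (a v) (b v)).induce (↑S : Set V)).CliqueFree 3)
    (hbox : ∀ v ∈ T, Set.Icc (a v) (b v) ⊆ Set.Ico m (m+1)) :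
    ((intersectionGraph fun v => arc (a v) (b v)).induce (↑T : Set V)).IsAcyclic := by
  apply aux_interval_acyclic _ (fun v => a v.1) (fun v => b v.1) (fun v => hab v.1)
  · intro u v
    constructor
    · rintro ⟨hne, hint⟩
      refine ⟨fun h => hne (congrArg Subtype.val h), ?_⟩
      exact (aux_arc_inter_iff (hbox _ u.2) (hbox _ v.2)).mp hint
    · rintro ⟨hne, hint⟩
      refine ⟨fun h => hne (Subtype.ext h), ?_⟩
      exact (aux_arc_inter_iff (hbox _ u.2) (hbox _ v.2)).mpr hint
  · rintro x y z ⟨hxy, ixy⟩ ⟨hxz, ixz⟩ ⟨hyz, iyz⟩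
    exact aux_no_triangle hcf (hTS x.2) (hTS y.2) (hTS z.2) hxy hxz hyz ixy ixz iyz

theorem stmt7 {V : Type*} [Fintype V] (a b : V → ℝ) (hab : ∀ v, a v ≤ b v)
    (t : ℕ)
    (ht : IsGreatest {n : ℕ | ∃ S : Finset V, S.card = n ∧
      ((intersectionGraph fun v => arc (a v) (b v)).induce (↑S : Set V)).CliqueFree 3} t) :
    ∃ S : Finset V, t ≤ S.card + 1 ∧
      ((intersectionGraph fun v => arc (a v) (b v)).induce (↑S : Set V)).IsAcyclic := by
  classical
  obtain ⟨⟨S, hScard, hScf⟩, -⟩ := ht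
  by_cases hfull : ∃ u ∈ S, 1 ≤ b u - a u
  · obtain ⟨u, huS, hu⟩ := hfull
    have hpos : 0 < S.card := Finset.card_pos.mpr ⟨u, huS⟩
    refine ⟨S.erase u, ?_, aux_acyclic_of_no_edges ?_⟩
    · rw [Finset.card_erase_of_mem huS]
      omega
    · rintro ⟨x, hx⟩ ⟨y, hy⟩ ⟨hne, hint⟩
      have hx' : x ∈ S.erase u := hx
      have hy' : y ∈ S.erase u := hy
      have harcne : ∀ v : V, (arc (a v) (b v)).Nonempty :=
        fun v => ⟨_, Set.mem_image_of_mem _ (Set.left_mem_Icc.mpr (hab v))⟩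
      refine aux_no_triangle hScf (Finset.mem_of_mem_erase hx') (Finset.mem_of_mem_erase hy')
        huS hne (Finset.ne_of_mem_erase hx') (Finset.ne_of_mem_erase hy') hint ?_ ?_
      · rw [aux_arc_univ hu, Set.inter_univ]; exact harcne x
      · rw [aux_arc_univ hu, Set.inter_univ]; exact harcne y
  · push_neg at hfull
    rcases S.eq_empty_or_nonempty with rfl | ⟨v0, hv0⟩
    · refine ⟨∅, by simp at hScard; omega, aux_acyclic_of_no_edges ?_⟩
      rintro ⟨x, hx⟩
      simp at hx
    · set m := Int.fract (a v0) with hm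
      set k : V → ℤ := fun v => ⌊a v - m⌋ with hk
      set a' : V → ℝ := fun v => a v - k v with ha'
      set b' : V → ℝ := fun v => b v - k v with hb'
      have harc : ∀ v, arc (a' v) (b' v) = arc (a v) (b v) :=
        fun v => aux_arc_shift (a v) (b v) (k v)
      have hfun : (fun v => arc (a v) (b v)) = fun v => arc (a' v) (b' v) :=
        funext fun v => (harc v).symm
      rw [hfun] at hScf ⊢
      have hab' : ∀ v, a' v ≤ b' v := fun v => sub_le_sub_right (hab v) _
      have hlow : ∀ v, m ≤ a' v := by
        intro v
        have := Int.floor_le (a v - m)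
        simp only [ha', hk]
        linarith
      have hhigh : ∀ v, a' v < m + 1 := by
        intro v
        have := Int.lt_floor_add_one (a v - m)
        simp only [ha', hk]
        linarith
      have hb'lt : ∀ v ∈ S, b' v < a' v + 1 := by
        intro v hv
        have := hfull v hv
        simp only [ha', hb']
        linarith
      have ha'v0 : a' v0 = m := by
        have h1 : a v0 - m = (⌊a v0⌋ : ℝ) := by rw [hm, Int.self_sub_fract]
        simp only [ha', hk, h1, Int.floor_intCast]
        linarith
      have hmem_v0 : ((m : ℝ) : AddCircle (1:ℝ)) ∈ arc (a' v0) (b' v0) :=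
        ⟨m, ⟨ha'v0.le, by rw [← ha'v0]; exact hab' v0⟩, rfl⟩
      have hboxgen : ∀ v ∈ S,
          (v = v0 ∨ ((m : ℝ) : AddCircle (1:ℝ)) ∉ arc (a' v) (b' v)) →
          Set.Icc (a' v) (b' v) ⊆ Set.Ico m (m+1) := by
        intro v hv hcase x hxmem
        have hbv : b' v < m + 1 := by
          rcases hcase with rfl | hnot
          · rw [← ha'v0]; exact hb'lt v hv
          · by_contra hge
            push_neg at hge
            have hmem1 : (m + 1 : ℝ) ∈ Set.Icc (a' v) (b' v) := ⟨(hhigh v).le, hge⟩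
            have : ((m + 1 : ℝ) : AddCircle (1:ℝ)) ∈ arc (a' v) (b' v) :=
              Set.mem_image_of_mem _ hmem1
            rw [AddCircle.coe_add_period] at this
            exact hnot this
        exact ⟨(hlow v).trans hxmem.1, lt_of_le_of_lt hxmem.2 hbv⟩
      by_cases hex : ∃ x ∈ S, x ≠ v0 ∧ ((m : ℝ) : AddCircle (1:ℝ)) ∈ arc (a' x) (b' x)
      · obtain ⟨x, hxS, hxne, hxmem⟩ := hex
        have hpos : 0 < S.card := Finset.card_pos.mpr ⟨x, hxS⟩
        refine ⟨S.erase x, ?_, ?_⟩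
        · rw [Finset.card_erase_of_mem hxS]; omega
        · refine aux_boxed_acyclic a' b' hab' S (S.erase x) (Finset.erase_subset _ _) m hScf ?_
          intro v hv
          apply hboxgen v (Finset.mem_of_mem_erase hv)
          by_cases hvv0 : v = v0
          · exact Or.inl hvv0
          · refine Or.inr fun hvm => ?_
            exact aux_no_triangle hScf hv0 hxS (Finset.mem_of_mem_erase hv)
              (Ne.symm hxne) (Ne.symm hvv0) (Ne.symm (Finset.ne_of_mem_erase hv))
              ⟨_, hmem_v0, hxmem⟩ ⟨_, hmem_v0, hvm⟩ ⟨_, hxmem, hvm⟩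
      · push_neg at hex
        refine ⟨S, by omega, ?_⟩
        refine aux_boxed_acyclic a' b' hab' S S le_rfl m hScf ?_
        intro v hv
        apply hboxgen v hv
        by_cases hvv0 : v = v0
        · exact Or.inl hvv0
        · exact Or.inr (hex v hv hvv0)
end
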